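/- Let X₁, …, X_n be Bernoulli (i.e. {0,1}-valued) random variables such that for all i ∈ [n], ℙ[X_i = 1 | X₁, …, X_{i−1}] ≤ p almost surely. Let B ∼ Bin(n, p) and X := Σ_{i=1}^n X_i. Then ℙ[X ≥ a] ≤ ℙ[B ≥ a] for all a ≥ 0. -/

import Mathlib

open MeasureTheory ProbabilityTheory

/-- A finite sum of reals each equal to 0 or 1 is a natural number. -/
lemma aux_sum_eq_nat {ι : Type*} (s : Finset ι) (f : ι → ℝ)
    (h : ∀ i ∈ s, f i = 0 ∨ f i = 1) : ∃ k : ℕ, ∑ i ∈ s, f i = k := by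
  classical
  induction s using Finset.induction with
  | empty => exact ⟨0, by simp⟩
  | @insert a s ha ih =>
    obtain ⟨k, hk⟩ := ih (fun i hi => h i (Finset.mem_insert_of_mem hi))
    rcases h a (Finset.mem_insert_self a s) with h0 | h1
    · exact ⟨k, by rw [Finset.sum_insert ha, h0, hk, zero_add]⟩
    · exact ⟨k + 1, by rw [Finset.sum_insert ha, h1, hk]; push_cast; ring⟩

/-- Pascal-type recursion for binomial tails. -/
lemma aux_tail_pascal (p : ℝ) (t m : ℕ) :
    ∑ k ∈ Finset.Ico (m+1) (t+2), (((t+1).choose k : ℝ)) * p^k * (1-p)^(t+1-k)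
    = (1-p) * ∑ k ∈ Finset.Ico (m+1) (t+1), ((t.choose k : ℝ)) * p^k * (1-p)^(t-k)
      + p * ∑ k ∈ Finset.Ico m (t+1), ((t.choose k : ℝ)) * p^k * (1-p)^(t-k) := by
  rcases le_or_gt m t with hm | hm
  · rw [Finset.sum_Ico_eq_sum_range, Finset.sum_Ico_eq_sum_range, Finset.sum_Ico_eq_sum_range]
    have h1 : t + 2 - (m+1) = (t - m) + 1 := by omega
    have h2 : t + 1 - (m+1) = t - m := by omega
    have h3 : t + 1 - m = (t - m) + 1 := by omega
    rw [h1, h2, h3]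
    -- extend the (1-p)-sum by a zero term
    have hz : ∑ i ∈ Finset.range (t - m), ((t.choose (m+1+i) : ℝ)) * p^(m+1+i) * (1-p)^(t-(m+1+i))
        = ∑ i ∈ Finset.range ((t - m) + 1),
            ((t.choose (m+1+i) : ℝ)) * p^(m+1+i) * (1-p)^(t-(m+1+i)) := by
      rw [Finset.sum_range_succ]
      have : t.choose (m+1+(t-m)) = 0 := Nat.choose_eq_zero_of_lt (by omega)
      rw [this]; push_cast; ring
    rw [hz, Finset.mul_sum, Finset.mul_sum, ← Finset.sum_add_distrib]
    apply Finset.sum_congr rfl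
    intro i hi
    have hi' : i ≤ t - m := by
      have := Finset.mem_range.mp hi; omega
    have hpascal : (t+1).choose (m+1+i) = t.choose (m+i) + t.choose (m+1+i) := by
      have e : m+1+i = (m+i)+1 := by omega
      rw [e, Nat.choose_succ_succ]
    rcases lt_or_eq_of_le hi' with hlt | heq
    · have e1 : t + 1 - (m+1+i) = (t - (m+1+i)) + 1 := by omega
      have e2 : t - (m+i) = (t - (m+1+i)) + 1 := by omega
      have e3 : m+1+i = (m+i)+1 := by omega
      rw [hpascal, e1, e2, e3]
      push_cast
      ring
    · -- i = t - m, so m+1+i = t+1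
      have hz2 : t.choose (m+1+i) = 0 := Nat.choose_eq_zero_of_lt (by omega)
      have e1 : t + 1 - (m+1+i) = 0 := by omega
      have e2 : t - (m+i) = 0 := by omega
      have e3 : m+1+i = (m+i)+1 := by omega
      rw [hpascal, hz2, e1, e2, e3]
      push_cast
      ring
  · have e1 : Finset.Ico (m+1) (t+2) = ∅ := Finset.Ico_eq_empty (by omega)
    have e2 : Finset.Ico (m+1) (t+1) = ∅ := Finset.Ico_eq_empty (by omega)
    have e3 : Finset.Ico m (t+1) = ∅ := Finset.Ico_eq_empty (by omega)
    rw [e1, e2, e3]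
    simp

/-- If `E[Y | F] ≤ p` a.s., then the integral of `Y` over any `F`-measurable set `A`
is at most `p * μ(A)`. -/
lemma aux_condexp_bound {Ω : Type*} (F : MeasurableSpace Ω) {m0 : MeasurableSpace Ω}
    (μ : Measure Ω) [IsFiniteMeasure μ]
    (hFle : F ≤ m0)
    (Y : Ω → ℝ) (hY : Integrable Y μ) (p : ℝ)
    (hc : ∀ᵐ ω ∂μ, (μ[Y | F]) ω ≤ p)
    (A : Set Ω) (hA : MeasurableSet[F] A) :
    ∫ ω in A, Y ω ∂μ ≤ p * (μ A).toReal := by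
  have h1 : ∫ ω in A, Y ω ∂μ = ∫ ω in A, (μ[Y | F]) ω ∂μ :=
    (setIntegral_condExp hFle hY hA).symm
  rw [h1]
  calc ∫ ω in A, (μ[Y | F]) ω ∂μ
      ≤ ∫ _ω in A, p ∂μ :=
        setIntegral_mono_ae integrable_condExp.integrableOn
          (integrable_const p).integrableOn hc
    _ = p * (μ A).toReal := by
        rw [setIntegral_const, smul_eq_mul, mul_comm]; rfl

/-- Let `X 0, …, X (n-1)` be `{0,1}`-valued random variables such that for each `i`
the conditional expectation of `X i` given the σ-algebra generated by
`X 0, …, X (i-1)` is at most `p` almost surely. Let `B ∼ Bin(n, p)` and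
`X := ∑ i, X i`. Then `ℙ[X ≥ a] ≤ ℙ[B ≥ a]` for all `a ≥ 0`, where
`ℙ[B ≥ a] = ∑_{k ≥ a} (n choose k) p^k (1-p)^{n-k}`. -/
theorem binomial_stochastic_domination {Ω : Type*} [MeasureSpace Ω]
    [IsProbabilityMeasure (ℙ : Measure Ω)]
    (n : ℕ) (p : ℝ) (hp0 : 0 ≤ p) (hp1 : p ≤ 1)
    (X : Fin n → Ω → ℝ)
    (hXmeas : ∀ i, Measurable (X i))
    (hXbern : ∀ i, ∀ᵐ ω ∂ℙ, X i ω = 0 ∨ X i ω = 1)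
    (hcond : ∀ i : Fin n, ∀ᵐ ω ∂ℙ,
      (ℙ[X i | ⨆ j : Fin n, ⨆ _ : j < i,
        MeasurableSpace.comap (X j) inferInstance]) ω ≤ p) :
    ∀ a : ℝ, 0 ≤ a →
      (ℙ {ω | a ≤ ∑ i, X i ω}).toReal ≤
        ∑ k ∈ (Finset.range (n + 1)).filter (fun k : ℕ => a ≤ (k : ℝ)),
          (n.choose k : ℝ) * p ^ k * (1 - p) ^ (n - k) := by
  classical
  have hgood : ∀ᵐ ω ∂ℙ, ∀ i, X i ω = 0 ∨ X i ω = 1 := ae_all_iff.mpr hXbern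
  set S : ℕ → Ω → ℝ :=
    fun t ω => ∑ i ∈ Finset.univ.filter (fun i : Fin n => (i:ℕ) < t), X i ω with hSdef
  have hSmeas : ∀ t, Measurable (S t) :=
    fun t => Finset.measurable_sum _ (fun j _ => hXmeas j)
  have hSnat : ∀ ω, (∀ i, X i ω = 0 ∨ X i ω = 1) → ∀ t, ∃ k : ℕ, S t ω = k :=
    fun ω hω t => aux_sum_eq_nat _ _ (fun i _ => hω i)
  have hXint : ∀ j, Integrable (X j) ℙ := by
    intro j
    refine (integrable_const (1:ℝ)).mono' (hXmeas j).aestronglyMeasurable ?_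
    filter_upwards [hXbern j] with ω hω
    rcases hω with h | h <;> simp [h]
  have key : ∀ t, t ≤ n → ∀ m : ℕ,
      (ℙ {ω | (m:ℝ) ≤ S t ω}).toReal
        ≤ ∑ k ∈ Finset.Ico m (t+1), ((t.choose k : ℝ)) * p^k * (1-p)^(t-k) := by
    intro t
    induction t with
    | zero =>
      intro _ m
      have hS0 : ∀ ω, S 0 ω = 0 := by
        intro ω; rw [hSdef]; simp
      cases m with
      | zero =>
        have huniv : {ω : Ω | ((0:ℕ):ℝ) ≤ S 0 ω} = Set.univ := by
          ext ω; simp [hS0]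
        rw [huniv]
        simp
      | succ m =>
        have hempty : {ω : Ω | ((m+1:ℕ):ℝ) ≤ S 0 ω} = ∅ := by
          ext ω
          simp only [Set.mem_setOf_eq, Set.mem_empty_iff_false, iff_false, not_le, hS0]
          push_cast; linarith
        rw [hempty, show Finset.Ico (m+1) 1 = ∅ from Finset.Ico_eq_empty (by omega)]
        simp
    | succ t ih =>
      intro ht m
      have ht' : t < n := ht
      have ihm := ih (le_of_lt ht')
      set i : Fin n := ⟨t, ht'⟩ with hidef
      have hival : (i : ℕ) = t := rfl
      have hFle : (⨆ j : Fin n, ⨆ _ : j < i,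
          MeasurableSpace.comap (X j) inferInstance) ≤ MeasureSpace.toMeasurableSpace := by
        apply iSup₂_le
        intro j _
        exact measurable_iff_comap_le.mp (by exact hXmeas j)
      have hsplit : ∀ ω, S (t+1) ω = S t ω + X i ω := by
        intro ω
        have hset : Finset.univ.filter (fun j : Fin n => (j:ℕ) < t+1)
            = insert i (Finset.univ.filter (fun j : Fin n => (j:ℕ) < t)) := by
          ext j
          simp only [Finset.mem_filter, Finset.mem_univ, true_and, Finset.mem_insert,
            Fin.ext_iff, hival]
          omega
        have hni : i ∉ Finset.univ.filter (fun j : Fin n => (j:ℕ) < t) := by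
          simp only [Finset.mem_filter, Finset.mem_univ, true_and, hival]
          omega
        rw [hSdef]
        simp only [hset, Finset.sum_insert hni]
        ring
      cases m with
      | zero =>
        have hle1 : (ℙ {ω | ((0:ℕ):ℝ) ≤ S (t+1) ω}).toReal ≤ 1 := by
          have h : ℙ {ω | ((0:ℕ):ℝ) ≤ S (t+1) ω} ≤ ℙ Set.univ :=
            measure_mono (Set.subset_univ _)
          have h2 := ENNReal.toReal_mono (measure_ne_top ℙ Set.univ) h
          simpa using h2
        have hsum1 : ∑ k ∈ Finset.Ico 0 (t+2), (((t+1).choose k : ℝ)) * p^k * (1-p)^(t+1-k)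
            = 1 := by
          rw [show Finset.Ico 0 (t+2) = Finset.range (t+2) from by rw [Finset.range_eq_Ico]]
          calc ∑ k ∈ Finset.range (t+2), (((t+1).choose k : ℝ)) * p^k * (1-p)^(t+1-k)
              = (p + (1-p))^(t+1) := by
                rw [add_pow]
                apply Finset.sum_congr rfl
                intro k _
                push_cast
                ring
            _ = 1 := by norm_num
        rw [hsum1]
        exact hle1
      | succ m =>
        set A : Set Ω := {ω | S t ω = (m:ℝ)} with hAdef
        set B1 : Set Ω := {ω | ((m+1:ℕ):ℝ) ≤ S (t+1) ω} with hB1def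
        set B2 : Set Ω := {ω | ((m+1:ℕ):ℝ) ≤ S t ω} with hB2def
        set C : Set Ω := {ω | (m:ℝ) ≤ S t ω} with hCdef
        have hB1m : MeasurableSet B1 := measurableSet_le measurable_const (hSmeas (t+1))
        have hB2m : MeasurableSet B2 := measurableSet_le measurable_const (hSmeas t)
        have hCm : MeasurableSet C := measurableSet_le measurable_const (hSmeas t)
        -- A is measurable w.r.t. the sub-σ-algebra
        have hSF : Measurable[⨆ j : Fin n, ⨆ _ : j < i,
            MeasurableSpace.comap (X j) inferInstance] (S t) := by
          apply Finset.measurable_sum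
          intro j hj
          have hj' : j < i := by
            rw [Fin.lt_def, hival]
            exact (Finset.mem_filter.mp hj).2
          exact measurable_iff_comap_le.mpr
            (le_iSup₂ (f := fun (j : Fin n) (_ : j < i) =>
              MeasurableSpace.comap (X j) inferInstance) j hj')
        have hAF : MeasurableSet[⨆ j : Fin n, ⨆ _ : j < i,
            MeasurableSpace.comap (X j) inferInstance] A :=
          hSF (measurableSet_singleton ((m:ℕ):ℝ))
        have hAm : MeasurableSet A := hFle A hAF
        have hKint : ∫ ω in A, X i ω ∂ℙ ≤ p * (ℙ A).toReal :=
          aux_condexp_bound _ ℙ hFle (X i) (hXint i) p (hcond i) A hAF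
        -- pointwise inequality
        have hpt : ∀ᵐ ω ∂ℙ, B1.indicator (fun _ => (1:ℝ)) ω
            ≤ B2.indicator (fun _ => (1:ℝ)) ω + A.indicator (X i) ω := by
          filter_upwards [hgood] with ω hω
          have hXnn : 0 ≤ X i ω := by rcases hω i with h | h <;> simp [h]
          have hindAnn : 0 ≤ A.indicator (X i) ω :=
            Set.indicator_nonneg (fun _ _ => hXnn) ω
          by_cases h1 : ω ∈ B1
          · rw [Set.indicator_of_mem h1]
            by_cases h2 : ω ∈ B2
            · rw [Set.indicator_of_mem h2]
              linarith
            · rw [Set.indicator_of_notMem h2]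
              have hB1' : ((m+1:ℕ):ℝ) ≤ S (t+1) ω := h1
              have hB2' : ¬ ((m+1:ℕ):ℝ) ≤ S t ω := h2
              have hXi1 : X i ω = 1 := by
                rcases hω i with h | h
                · exfalso
                  apply hB2'
                  have hs := hsplit ω
                  rw [h, add_zero] at hs
                  linarith [hB1', hs.symm.le]
                · exact h
              obtain ⟨k, hk⟩ := hSnat ω hω t
              have hkm : k = m := by
                have hup : (k:ℝ) < (m:ℝ) + 1 := by
                  rw [← hk]
                  push_cast at hB2'
                  linarith [not_le.mp hB2']
                have hlow : (m:ℝ) ≤ (k:ℝ) := by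
                  have hs := hsplit ω
                  rw [hXi1] at hs
                  push_cast at hB1'
                  rw [← hk]
                  linarith
                have h1' : m ≤ k := by exact_mod_cast hlow
                have h2' : k < m + 1 := by exact_mod_cast hup
                omega
              have hAmem : ω ∈ A := by
                show S t ω = (m:ℝ)
                rw [hk, hkm]
              rw [Set.indicator_of_mem hAmem, hXi1]
              norm_num
          · rw [Set.indicator_of_notMem h1]
            have hb2nn : (0:ℝ) ≤ B2.indicator (fun _ => (1:ℝ)) ω :=
              Set.indicator_nonneg (fun _ _ => zero_le_one) ω
            linarith
        -- integrate the pointwise inequality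
        have hint1 : Integrable (B1.indicator (fun _ => (1:ℝ))) ℙ :=
          (integrable_const (1:ℝ)).indicator hB1m
        have hint2 : Integrable (B2.indicator (fun _ => (1:ℝ))) ℙ :=
          (integrable_const (1:ℝ)).indicator hB2m
        have hint3 : Integrable (A.indicator (X i)) ℙ := (hXint i).indicator hAm
        have hstep : (ℙ B1).toReal ≤ (ℙ B2).toReal + ∫ ω in A, X i ω ∂ℙ := by
          show (ℙ : Measure Ω).real B1 ≤ (ℙ : Measure Ω).real B2 + ∫ ω in A, X i ω ∂ℙ
          rw [← integral_indicator_one hB1m, ← integral_indicator_one hB2m,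
            ← integral_indicator hAm]
          calc ∫ ω, B1.indicator (fun _ => (1:ℝ)) ω ∂ℙ
              ≤ ∫ ω, (B2.indicator (fun _ => (1:ℝ)) ω + A.indicator (X i) ω) ∂ℙ :=
                integral_mono_ae hint1 (hint2.add hint3) hpt
            _ = (∫ ω, B2.indicator (fun _ => (1:ℝ)) ω ∂ℙ)
                + ∫ ω, A.indicator (X i) ω ∂ℙ :=
                integral_add hint2 hint3
        -- measure arithmetic: ℙ A = ℙ C - ℙ B2
        have hPA : (ℙ A).toReal = (ℙ C).toReal - (ℙ B2).toReal := by
          have hdisj : Disjoint A B2 := by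
            rw [Set.disjoint_left]
            intro ω hAω hBω
            have h1 : S t ω = (m:ℝ) := hAω
            have h2 : ((m+1:ℕ):ℝ) ≤ S t ω := hBω
            push_cast at h2
            linarith
          have hunion : ℙ (A ∪ B2) = ℙ C := by
            apply measure_congr
            rw [Filter.eventuallyEq_set]
            filter_upwards [hgood] with ω hω
            obtain ⟨k, hk⟩ := hSnat ω hω t
            simp only [Set.mem_union, hAdef, hB2def, hCdef, Set.mem_setOf_eq, hk]
            push_cast
            constructor
            · rintro (h | h)
              · exact_mod_cast h.symm.le
              · linarith
            · intro h
              have hmk : m ≤ k := by exact_mod_cast h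
              rcases Nat.lt_or_ge k (m+1) with hlt | hge
              · left
                have : k = m := by omega
                rw [this]
              · right
                exact_mod_cast hge
          have hadd := measure_union (μ := ℙ) hdisj hB2m
          have htr := ENNReal.toReal_add (measure_ne_top ℙ A) (measure_ne_top ℙ B2)
          rw [← hadd, hunion] at htr
          linarith
        have hPmono := ihm (m+1)
        have hPmono2 := ihm m
        have hq : (0:ℝ) ≤ 1 - p := by linarith
        have hcomb : (ℙ B1).toReal
            ≤ (1-p) * (ℙ B2).toReal + p * (ℙ C).toReal := by
          have h2 := hKint
          rw [hPA] at h2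
          nlinarith [hstep]
        calc (ℙ B1).toReal
            ≤ (1-p) * (ℙ B2).toReal + p * (ℙ C).toReal := hcomb
          _ ≤ (1-p) * (∑ k ∈ Finset.Ico (m+1) (t+1), ((t.choose k : ℝ)) * p^k * (1-p)^(t-k))
              + p * (∑ k ∈ Finset.Ico m (t+1), ((t.choose k : ℝ)) * p^k * (1-p)^(t-k)) := by
              have h1 := mul_le_mul_of_nonneg_left hPmono hq
              have h2 := mul_le_mul_of_nonneg_left hPmono2 hp0
              linarith
          _ = ∑ k ∈ Finset.Ico (m+1) (t+2), (((t+1).choose k : ℝ)) * p^k * (1-p)^(t+1-k) :=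
              (aux_tail_pascal p t m).symm
  -- final assembly
  intro a ha
  set m : ℕ := ⌈a⌉₊ with hmdef
  have hSn : ∀ ω, S n ω = ∑ i, X i ω := by
    intro ω
    show (∑ i ∈ Finset.univ.filter (fun i : Fin n => (i:ℕ) < n), X i ω) = ∑ i, X i ω
    congr 1
    apply Finset.filter_true_of_mem
    intro j _
    exact j.isLt
  have h1 : ℙ {ω | a ≤ ∑ i, X i ω} ≤ ℙ {ω | (m:ℝ) ≤ S n ω} := by
    apply measure_mono_ae
    filter_upwards [hgood] with ω hω hmem
    have hmem' : a ≤ ∑ i, X i ω := hmem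
    obtain ⟨k, hk⟩ := hSnat ω hω n
    show (m:ℝ) ≤ S n ω
    rw [hk]
    have hak : a ≤ (k:ℝ) := by rw [← hk, hSn]; exact hmem'
    exact_mod_cast Nat.ceil_le.mpr hak
  have h2 : (Finset.range (n + 1)).filter (fun k : ℕ => a ≤ (k : ℝ))
      = Finset.Ico m (n+1) := by
    ext k
    simp only [Finset.mem_filter, Finset.mem_range, Finset.mem_Ico]
    constructor
    · rintro ⟨hk, hak⟩
      exact ⟨Nat.ceil_le.mpr hak, hk⟩
    · rintro ⟨hmk, hk⟩
      exact ⟨hk, le_trans (Nat.le_ceil a) (by exact_mod_cast hmk)⟩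
  rw [h2]
  calc (ℙ {ω | a ≤ ∑ i, X i ω}).toReal
      ≤ (ℙ {ω | (m:ℝ) ≤ S n ω}).toReal :=
        ENNReal.toReal_mono (measure_ne_top ℙ _) h1
    _ ≤ ∑ k ∈ Finset.Ico m (n+1), ((n.choose k : ℝ)) * p^k * (1-p)^(n-k) := key n le_rfl m
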